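/- (Post-processing bound at α = 1: quantization does not worsen the Gaussian privacy budget.) The Kullback–Leibler divergence between the quantized-Gaussian pmfs at the extreme inputs is at most the KL divergence between the underlying Gaussians: ∑_{r=0}^{k−1} P_{C_q/2}(r)·log(P_{C_q/2}(r)/P_{−C_q/2}(r)) ≤ C_q²/(2σ²). -/

import Mathlib

open MeasureTheory Real

/-- Density of the normal distribution `N(x, σ²)`. -/
noncomputable def gpdf (σ x t : ℝ) : ℝ :=
  (1 / (σ * Real.sqrt (2 * Real.pi))) * Real.exp (-(t - x) ^ 2 / (2 * σ ^ 2))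

/-- Quantization levels `B(r) = -C_q + r · δ`, with `δ = 2·C_q/(k-1)`. -/
noncomputable def Blev (Cq : ℝ) (k : ℕ) (r : ℕ) : ℝ :=
  -Cq + (r : ℝ) * (2 * Cq / ((k : ℝ) - 1))

/-- The quantized-Gaussian pmf `P_x(r)` on `{0, 1, …, k-1}`. -/
noncomputable def qgPmf (Cq σ : ℝ) (k : ℕ) (x : ℝ) (r : ℕ) : ℝ :=
  if r = 0 then
    (∫ t in Set.Iic (Blev Cq k 0), gpdf σ x t)
      + ∫ t in (Blev Cq k 0)..(Blev Cq k 1),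
          gpdf σ x t * (Blev Cq k 1 - t) / (2 * Cq / ((k : ℝ) - 1))
  else if r = k - 1 then
    (∫ t in (Blev Cq k (k - 2))..(Blev Cq k (k - 1)),
        gpdf σ x t * (t - Blev Cq k (k - 2)) / (2 * Cq / ((k : ℝ) - 1)))
      + ∫ t in Set.Ici (Blev Cq k (k - 1)), gpdf σ x t
  else
    (∫ t in (Blev Cq k (r - 1))..(Blev Cq k r),
        gpdf σ x t * (t - Blev Cq k (r - 1)) / (2 * Cq / ((k : ℝ) - 1)))
      + ∫ t in (Blev Cq k r)..(Blev Cq k (r + 1)),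
          gpdf σ x t * (Blev Cq k (r + 1) - t) / (2 * Cq / ((k : ℝ) - 1))
set_option linter.unusedSectionVars false
set_option linter.unusedVariables false



lemma gpdf_pos {σ : ℝ} (hσ : 0 < σ) (x t : ℝ) : 0 < gpdf σ x t := by
  unfold gpdf
  have h2π : (0:ℝ) < 2 * Real.pi := by positivity
  positivity

lemma gpdf_eq {σ : ℝ} (hσ : 0 < σ) (x : ℝ) :
    gpdf σ x = ProbabilityTheory.gaussianPDFReal x ⟨σ ^ 2, sq_nonneg σ⟩ := by
  funext t
  unfold gpdf ProbabilityTheory.gaussianPDFReal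
  have h1 : Real.sqrt (2 * Real.pi * σ ^ 2) = σ * Real.sqrt (2 * Real.pi) := by
    rw [Real.sqrt_mul (by positivity), Real.sqrt_sq hσ.le]; ring
  change _ = (√(2 * π * σ ^ 2))⁻¹ * rexp (-(t - x) ^ 2 / (2 * σ ^ 2))
  rw [h1]
  ring_nf

lemma integrable_gpdf {σ : ℝ} (hσ : 0 < σ) (x : ℝ) : Integrable (gpdf σ x) := by
  rw [gpdf_eq hσ]; exact ProbabilityTheory.integrable_gaussianPDFReal _ _

lemma integral_gpdf {σ : ℝ} (hσ : 0 < σ) (x : ℝ) : ∫ t, gpdf σ x t = 1 := by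
  rw [gpdf_eq hσ]
  exact ProbabilityTheory.integral_gaussianPDFReal_eq_one x
    (NNReal.coe_ne_zero.mp (by exact (by positivity : (0:ℝ) < σ ^ 2).ne'))

lemma gpdf_shift {σ : ℝ} (x u : ℝ) : gpdf σ x (u + x) = gpdf σ 0 u := by
  unfold gpdf; ring_nf

lemma integrable_id_mul_gpdf {σ : ℝ} (hσ : 0 < σ) (x : ℝ) :
    Integrable (fun t => t * gpdf σ x t) := by
  have hb : (0:ℝ) < (2 * σ ^ 2)⁻¹ := by positivity
  set c : ℝ := 1 / (σ * Real.sqrt (2 * Real.pi))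
  have h1 : Integrable (fun u : ℝ => c * ((u * Real.exp (-(2*σ^2)⁻¹ * u ^ 2))
      + x * Real.exp (-(2*σ^2)⁻¹ * u ^ 2))) :=
    (((integrable_mul_exp_neg_mul_sq hb).add
      ((integrable_exp_neg_mul_sq hb).const_mul x))).const_mul c
  have h2 := h1.comp_sub_right x
  refine h2.congr (Filter.Eventually.of_forall fun t => ?_)
  unfold gpdf
  have : -(2*σ^2)⁻¹ * (t - x) ^ 2 = -(t - x) ^ 2 / (2 * σ ^ 2) := by
    field_simp
  simp only []
  rw [← this]; ring

lemma integral_id_mul_gpdf {σ : ℝ} (hσ : 0 < σ) (x : ℝ) :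
    ∫ t, t * gpdf σ x t = x := by
  have hshift : (∫ t, t * gpdf σ x t) = ∫ u, (u + x) * gpdf σ x (u + x) :=
    (integral_add_right_eq_self (fun t => t * gpdf σ x t) x).symm
  have hodd : (∫ u, u * gpdf σ 0 u) = 0 := by
    have h1 : (∫ u, -u * gpdf σ 0 (-u)) = ∫ u, u * gpdf σ 0 u := by
      have := integral_neg_eq_self (fun u : ℝ => u * gpdf σ 0 u) volume
      simpa using this
    have h2 : ∀ u : ℝ, -u * gpdf σ 0 (-u) = -(u * gpdf σ 0 u) := by
      intro u; unfold gpdf; ring_nf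
    simp_rw [h2, integral_neg] at h1
    linarith
  rw [hshift]
  have : ∀ u : ℝ, (u + x) * gpdf σ x (u + x) = u * gpdf σ 0 u + x * gpdf σ 0 u := by
    intro u; rw [gpdf_shift]; ring
  simp_rw [this]
  rw [integral_add (by simpa [gpdf_shift] using (integrable_id_mul_gpdf hσ 0))
    ((integrable_gpdf hσ 0).const_mul x), hodd, integral_const_mul, integral_gpdf hσ]
  simp

lemma log_gpdf_ratio {Cq σ : ℝ} (hσ : 0 < σ) (t : ℝ) :
    Real.log (gpdf σ (Cq / 2) t / gpdf σ (-(Cq / 2)) t) = Cq * t / σ ^ 2 := by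
  unfold gpdf
  have hc : (0:ℝ) < 1 / (σ * Real.sqrt (2 * Real.pi)) := by
    have h2π : (0:ℝ) < 2 * Real.pi := by positivity
    positivity
  rw [mul_div_mul_left _ _ hc.ne', ← Real.exp_sub, Real.log_exp]
  field_simp
  ring
set_option linter.unusedSectionVars false


/-- Rising half-tent supported on `Ioc (B j) (B (j+1))`. -/
noncomputable def upw (Cq : ℝ) (k j : ℕ) (t : ℝ) : ℝ :=
  Set.indicator (Set.Ioc (Blev Cq k j) (Blev Cq k (j+1)))
    (fun s => (s - Blev Cq k j) / (2 * Cq / ((k : ℝ) - 1))) t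

/-- Falling half-tent supported on `Ioc (B j) (B (j+1))`. -/
noncomputable def dnw (Cq : ℝ) (k j : ℕ) (t : ℝ) : ℝ :=
  Set.indicator (Set.Ioc (Blev Cq k j) (Blev Cq k (j+1)))
    (fun s => (Blev Cq k (j+1) - s) / (2 * Cq / ((k : ℝ) - 1))) t

/-- The weight functions, so that `qgPmf x r = ∫ gpdf σ x t * wq r t`. -/
noncomputable def wq (Cq : ℝ) (k r : ℕ) (t : ℝ) : ℝ :=
  if r = 0 then Set.indicator (Set.Iic (Blev Cq k 0)) (fun _ => (1:ℝ)) t + dnw Cq k 0 t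
  else if r = k - 1 then upw Cq k (k-2) t + Set.indicator (Set.Ioi (Blev Cq k (k-1))) (fun _ => (1:ℝ)) t
  else upw Cq k (r-1) t + dnw Cq k r t

section wlem
variable {Cq : ℝ} {k : ℕ} (hC : 0 < Cq) (hk : 2 ≤ k)
include hC hk

lemma delta_pos : 0 < 2 * Cq / ((k : ℝ) - 1) := by
  have : (2:ℝ) ≤ (k:ℝ) := by exact_mod_cast hk
  have : (0:ℝ) < (k:ℝ) - 1 := by linarith
  positivity

omit hC hk in
lemma Blev_succ (j : ℕ) : Blev Cq k (j+1) = Blev Cq k j + 2 * Cq / ((k : ℝ) - 1) := by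
  unfold Blev; push_cast; ring

lemma Blev_mono {i j : ℕ} (hij : i ≤ j) : Blev Cq k i ≤ Blev Cq k j := by
  unfold Blev
  have h1 : (i:ℝ) ≤ (j:ℝ) := by exact_mod_cast hij
  nlinarith [delta_pos hC hk]

lemma Blev_strict {i j : ℕ} (hij : i < j) : Blev Cq k i < Blev Cq k j := by
  unfold Blev
  have h1 : (i:ℝ) + 1 ≤ (j:ℝ) := by exact_mod_cast hij
  nlinarith [delta_pos hC hk]

lemma upw_nonneg (j : ℕ) (t : ℝ) : 0 ≤ upw Cq k j t := by
  unfold upw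
  by_cases h : t ∈ Set.Ioc (Blev Cq k j) (Blev Cq k (j+1))
  · rw [Set.indicator_of_mem h]
    exact div_nonneg (by linarith [h.1]) (delta_pos hC hk).le
  · rw [Set.indicator_of_notMem h]

lemma dnw_nonneg (j : ℕ) (t : ℝ) : 0 ≤ dnw Cq k j t := by
  unfold dnw
  by_cases h : t ∈ Set.Ioc (Blev Cq k j) (Blev Cq k (j+1))
  · rw [Set.indicator_of_mem h]
    exact div_nonneg (by linarith [h.2]) (delta_pos hC hk).le
  · rw [Set.indicator_of_notMem h]

lemma upw_le_one (j : ℕ) (t : ℝ) : upw Cq k j t ≤ 1 := by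
  unfold upw
  by_cases h : t ∈ Set.Ioc (Blev Cq k j) (Blev Cq k (j+1))
  · rw [Set.indicator_of_mem h, div_le_one (delta_pos hC hk)]
    have := h.2; rw [Blev_succ] at this; linarith
  · rw [Set.indicator_of_notMem h]; norm_num

lemma dnw_le_one (j : ℕ) (t : ℝ) : dnw Cq k j t ≤ 1 := by
  unfold dnw
  by_cases h : t ∈ Set.Ioc (Blev Cq k j) (Blev Cq k (j+1))
  · rw [Set.indicator_of_mem h, div_le_one (delta_pos hC hk)]
    have := h.1; rw [Blev_succ]; linarith
  · rw [Set.indicator_of_notMem h]; norm_num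

lemma wq_nonneg (r : ℕ) (t : ℝ) : 0 ≤ wq Cq k r t := by
  unfold wq
  split_ifs <;>
    refine add_nonneg ?_ ?_ <;>
    first
      | exact upw_nonneg hC hk _ _
      | exact dnw_nonneg hC hk _ _
      | exact Set.indicator_nonneg (fun _ _ => zero_le_one) _

lemma wq_le_two (r : ℕ) (t : ℝ) : wq Cq k r t ≤ 2 := by
  have hind : ∀ (s : Set ℝ), Set.indicator s (fun _ => (1:ℝ)) t ≤ 1 := by
    intro s; by_cases h : t ∈ s
    · rw [Set.indicator_of_mem h]
    · rw [Set.indicator_of_notMem h]; norm_num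
  unfold wq
  have h2 : (2:ℝ) = 1 + 1 := by norm_num
  rw [h2]
  split_ifs <;>
    refine add_le_add ?_ ?_ <;>
    first
      | exact upw_le_one hC hk _ _
      | exact dnw_le_one hC hk _ _
      | exact hind _

end wlem
section wlem2
variable {Cq : ℝ} {k : ℕ} (hC : 0 < Cq) (hk : 2 ≤ k)

lemma measurable_upw (j : ℕ) : Measurable (upw Cq k j) := by
  unfold upw
  exact Measurable.indicator (by fun_prop) measurableSet_Ioc

lemma measurable_dnw (j : ℕ) : Measurable (dnw Cq k j) := by
  unfold dnw
  exact Measurable.indicator (by fun_prop) measurableSet_Ioc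

lemma measurable_wq (r : ℕ) : Measurable (wq Cq k r) := by
  unfold wq
  split_ifs <;>
    refine Measurable.add ?_ ?_ <;>
    first
      | exact measurable_dnw _
      | exact measurable_upw _
      | exact Measurable.indicator measurable_const (by measurability)

end wlem2
section wsum
variable {Cq : ℝ} {k : ℕ} (hC : 0 < Cq) (hk : 2 ≤ k)
include hC hk

lemma wq_sum (t : ℝ) : ∑ r ∈ Finset.range k, wq Cq k r t = 1 := by
  classical
  by_cases ht0 : t ≤ Blev Cq k 0
  · -- left tail
    have hz : ∀ j, t ∉ Set.Ioc (Blev Cq k j) (Blev Cq k (j+1)) := fun j hmem =>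
      absurd hmem.1 (not_lt.mpr (ht0.trans (Blev_mono hC hk (Nat.zero_le j))))
    have hIoi : t ∉ Set.Ioi (Blev Cq k (k-1)) := fun h =>
      absurd (Set.mem_Ioi.mp h) (not_lt.mpr (ht0.trans (Blev_mono hC hk (Nat.zero_le _))))
    rw [Finset.sum_eq_single 0]
    · rw [wq, if_pos rfl, Set.indicator_of_mem (Set.mem_Iic.mpr ht0), dnw,
        Set.indicator_of_notMem (hz 0)]
      ring
    · intro r _ hr
      rw [wq, if_neg hr]
      split_ifs
      · rw [upw, Set.indicator_of_notMem (hz _), Set.indicator_of_notMem hIoi]; ring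
      · rw [upw, dnw, Set.indicator_of_notMem (hz _), Set.indicator_of_notMem (hz _)]; ring
    · intro h; exact absurd (Finset.mem_range.mpr (by omega)) h
  by_cases htk : Blev Cq k (k-1) < t
  · -- right tail
    have hz : ∀ j, j + 1 ≤ k - 1 → t ∉ Set.Ioc (Blev Cq k j) (Blev Cq k (j+1)) := fun j hj hmem =>
      absurd hmem.2 (not_le.mpr (lt_of_le_of_lt (Blev_mono hC hk hj) htk))
    have hIic : t ∉ Set.Iic (Blev Cq k 0) := fun h =>
      absurd (Set.mem_Iic.mp h) (not_le.mpr (lt_of_le_of_lt (Blev_mono hC hk (Nat.zero_le _)) htk))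
    have hzz : t ∉ Set.Ioc (Blev Cq k (k-2)) (Blev Cq k (k-2+1)) := hz _ (by omega)
    rw [Finset.sum_eq_single (k-1)]
    · rw [wq, if_neg (by omega), if_pos rfl, upw, Set.indicator_of_notMem hzz,
        Set.indicator_of_mem (Set.mem_Ioi.mpr htk)]
      ring
    · intro r hr hrk
      have hrlt := Finset.mem_range.mp hr
      rw [wq]
      split_ifs with h0
      · rw [Set.indicator_of_notMem hIic, dnw, Set.indicator_of_notMem (hz 0 (by omega))]
        ring
      · rw [upw, dnw, Set.indicator_of_notMem (hz (r-1) (by omega)),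
          Set.indicator_of_notMem (hz r (by omega))]
        ring
    · intro h; exact absurd (Finset.mem_range.mpr (by omega)) h
  -- middle
  push_neg at ht0 htk
  have hex : ∃ n, t ≤ Blev Cq k (n+1) := ⟨k-2, by rw [(by omega : k-2+1 = k-1)]; exact htk⟩
  set j := Nat.find hex with hjdef
  have hj2 : t ≤ Blev Cq k (j+1) := Nat.find_spec hex
  have hj3 : j ≤ k - 2 := Nat.find_min' hex (by rw [(by omega : k-2+1 = k-1)]; exact htk)
  have hj1 : Blev Cq k j < t := by
    rcases Nat.eq_zero_or_pos j with h0 | hpos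
    · rw [h0]; exact ht0
    · have hm := Nat.find_min hex (m := j - 1) (by omega)
      push_neg at hm
      rwa [(by omega : j - 1 + 1 = j)] at hm
  have htj : t ∈ Set.Ioc (Blev Cq k j) (Blev Cq k (j+1)) := ⟨hj1, hj2⟩
  have key : ∀ i, i ≠ j → t ∉ Set.Ioc (Blev Cq k i) (Blev Cq k (i+1)) := by
    intro i hi hmem
    rcases lt_or_gt_of_ne hi with h | h
    · exact absurd hmem.2 (not_le.mpr (lt_of_le_of_lt (Blev_mono hC hk (by omega)) hj1))
    · exact absurd hmem.1 (not_lt.mpr (hj2.trans (Blev_mono hC hk (by omega))))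
  have hIic : t ∉ Set.Iic (Blev Cq k 0) := fun h =>
    absurd (Set.mem_Iic.mp h) (not_le.mpr ht0)
  have hIoi : t ∉ Set.Ioi (Blev Cq k (k-1)) := fun h =>
    absurd (Set.mem_Ioi.mp h)
      (not_lt.mpr (hj2.trans (Blev_mono hC hk (by omega : j + 1 ≤ k - 1))))
  have hr : ∀ r ∈ Finset.range k, wq Cq k r t =
      (if r = j then dnw Cq k j t else 0) + (if r = j+1 then upw Cq k j t else 0) := by
    intro r hrmem
    have hrlt := Finset.mem_range.mp hrmem
    by_cases h1 : r = j
    · rw [if_pos h1, if_neg (by omega)]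
      by_cases hj0 : r = 0
      · rw [wq, if_pos hj0, Set.indicator_of_notMem hIic, ← h1, hj0]
        ring
      · rw [wq, if_neg hj0, if_neg (by omega), upw,
          Set.indicator_of_notMem (key (r-1) (by omega)), ← h1]
        ring
    · by_cases h2 : r = j + 1
      · rw [if_neg h1, if_pos h2]
        by_cases hk1 : j + 1 = k - 1
        · rw [wq, if_neg (by omega), if_pos (by omega : r = k - 1),
            Set.indicator_of_notMem hIoi, (by omega : k - 2 = j)]
          ring
        · rw [wq, if_neg (by omega), if_neg (by omega), (by omega : r - 1 = j), dnw,
            Set.indicator_of_notMem (by rw [(by omega : r = j + 1)]; exact key (j+1) (by omega))]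
          ring
      · rw [if_neg h1, if_neg h2, wq]
        split_ifs with h0 hk1
        · rw [Set.indicator_of_notMem hIic, dnw, Set.indicator_of_notMem (key 0 (by omega))]
        · rw [upw, Set.indicator_of_notMem (key (k-2) (by omega)),
            Set.indicator_of_notMem hIoi]
        · rw [upw, dnw, Set.indicator_of_notMem (key (r-1) (by omega)),
            Set.indicator_of_notMem (key r h1)]
  rw [Finset.sum_congr rfl hr, Finset.sum_add_distrib,
    Finset.sum_ite_eq' (Finset.range k) j, Finset.sum_ite_eq' (Finset.range k) (j+1),
    if_pos (Finset.mem_range.mpr (by omega : j < k)),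
    if_pos (Finset.mem_range.mpr (by omega : j + 1 < k)), dnw, upw,
    Set.indicator_of_mem htj, Set.indicator_of_mem htj, ← add_div, Blev_succ]
  have hd := delta_pos hC hk
  have hk1 : (0:ℝ) < (k:ℝ) - 1 := by
    have : (2:ℝ) ≤ (k:ℝ) := by exact_mod_cast hk
    linarith
  field_simp
  ring

end wsum
lemma integral_mul_indicator (f φ : ℝ → ℝ) {s : Set ℝ} (hs : MeasurableSet s) :
    ∫ t, f t * Set.indicator s φ t = ∫ t in s, f t * φ t := by
  rw [← MeasureTheory.integral_indicator hs]
  congr 1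
  ext t
  by_cases h : t ∈ s <;> simp [Set.indicator_apply, h]

lemma integrable_gpdf_mul_bdd {σ x : ℝ} (hσ : 0 < σ) {w : ℝ → ℝ} (hw : Measurable w)
    (C : ℝ) (hbd : ∀ t, ‖w t‖ ≤ C) : Integrable (fun t => gpdf σ x t * w t) := by
  have := (integrable_gpdf hσ x).bdd_mul hw.aestronglyMeasurable (Filter.Eventually.of_forall hbd)
  simpa [mul_comm] using this

section pmf
variable {Cq σ : ℝ} {k : ℕ} (hC : 0 < Cq) (hσ : 0 < σ) (hk : 2 ≤ k)
include hC hσ hk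

lemma norm_upw_le (j : ℕ) (t : ℝ) : ‖upw Cq k j t‖ ≤ 1 := by
  rw [Real.norm_eq_abs, abs_le]
  exact ⟨by linarith [upw_nonneg hC hk j t], upw_le_one hC hk j t⟩

lemma norm_dnw_le (j : ℕ) (t : ℝ) : ‖dnw Cq k j t‖ ≤ 1 := by
  rw [Real.norm_eq_abs, abs_le]
  exact ⟨by linarith [dnw_nonneg hC hk j t], dnw_le_one hC hk j t⟩

omit hC hσ hk in
lemma norm_ind_le (s : Set ℝ) (t : ℝ) : ‖Set.indicator s (fun _ => (1:ℝ)) t‖ ≤ 1 := by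
  rw [Real.norm_eq_abs, abs_le]
  constructor
  · by_cases h : t ∈ s <;> simp [Set.indicator_apply, h]
  · by_cases h : t ∈ s <;> simp [Set.indicator_apply, h]

lemma integrable_gpdf_upw (x : ℝ) (j : ℕ) :
    Integrable (fun t => gpdf σ x t * upw Cq k j t) :=
  integrable_gpdf_mul_bdd hσ (measurable_upw j) 1 (norm_upw_le hC hσ hk j)

lemma integrable_gpdf_dnw (x : ℝ) (j : ℕ) :
    Integrable (fun t => gpdf σ x t * dnw Cq k j t) :=
  integrable_gpdf_mul_bdd hσ (measurable_dnw j) 1 (norm_dnw_le hC hσ hk j)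

omit hC hk in
lemma integrable_gpdf_ind (x : ℝ) {s : Set ℝ} (hs : MeasurableSet s) :
    Integrable (fun t => gpdf σ x t * Set.indicator s (fun _ => (1:ℝ)) t) :=
  integrable_gpdf_mul_bdd hσ (measurable_const.indicator hs) 1 (norm_ind_le s)

lemma qgPmf_eq (x : ℝ) {r : ℕ} (hr : r < k) :
    qgPmf Cq σ k x r = ∫ t, gpdf σ x t * wq Cq k r t := by
  have hd := delta_pos hC hk
  unfold qgPmf wq
  split_ifs with h0 h1
  · simp_rw [mul_add]
    rw [MeasureTheory.integral_add (integrable_gpdf_ind hσ x measurableSet_Iic)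
        (integrable_gpdf_dnw hC hσ hk x 0),
      integral_mul_indicator _ _ measurableSet_Iic]
    unfold dnw
    rw [integral_mul_indicator _ _ measurableSet_Ioc,
      intervalIntegral.integral_of_le (Blev_mono hC hk (Nat.zero_le 1))]
    congr 1
    · simp
    · apply MeasureTheory.setIntegral_congr_fun measurableSet_Ioc
      intro t _
      simp [mul_div_assoc]
  · simp_rw [mul_add]
    rw [MeasureTheory.integral_add (integrable_gpdf_upw hC hσ hk x (k-2))
        (integrable_gpdf_ind hσ x measurableSet_Ioi),
      integral_mul_indicator _ _ measurableSet_Ioi]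
    unfold upw
    rw [integral_mul_indicator _ _ measurableSet_Ioc,
      intervalIntegral.integral_of_le (Blev_mono hC hk (by omega : k - 2 ≤ k - 1)),
      (by omega : k - 2 + 1 = k - 1), MeasureTheory.integral_Ici_eq_integral_Ioi]
    congr 1
    · apply MeasureTheory.setIntegral_congr_fun measurableSet_Ioc
      intro t _
      simp [mul_div_assoc]
    · simp
  · simp_rw [mul_add]
    rw [MeasureTheory.integral_add (integrable_gpdf_upw hC hσ hk x (r-1))
        (integrable_gpdf_dnw hC hσ hk x r)]
    unfold upw dnw
    rw [integral_mul_indicator _ _ measurableSet_Ioc,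
      integral_mul_indicator _ _ measurableSet_Ioc,
      intervalIntegral.integral_of_le (Blev_mono hC hk (by omega : r - 1 ≤ r)),
      intervalIntegral.integral_of_le (Blev_mono hC hk (by omega : r ≤ r + 1)),
      (by omega : r - 1 + 1 = r)]
    congr 1 <;>
    · apply MeasureTheory.setIntegral_congr_fun measurableSet_Ioc
      intro t _
      simp [mul_div_assoc]

omit hC hk in
lemma continuous_gpdf (x : ℝ) : Continuous (gpdf σ x) := by
  unfold gpdf; fun_prop

lemma qgPmf_pos (x : ℝ) {r : ℕ} (hr : r < k) : 0 < qgPmf Cq σ k x r := by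
  have hd := delta_pos hC hk
  have hcont := continuous_gpdf hσ x
  have hsupp : Function.support (gpdf σ x) = Set.univ := by
    ext t; simp [Function.mem_support, (gpdf_pos hσ x t).ne']
  unfold qgPmf
  split_ifs with h0 h1
  · have hpos : 0 < ∫ t in Set.Iic (Blev Cq k 0), gpdf σ x t := by
      rw [MeasureTheory.setIntegral_pos_iff_support_of_nonneg_ae
        (Filter.Eventually.of_forall fun t => (gpdf_pos hσ x t).le)
        ((integrable_gpdf hσ x).integrableOn)]
      rw [hsupp, Set.univ_inter, Real.volume_Iic]
      exact ENNReal.zero_lt_top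
    have hnn : 0 ≤ ∫ t in (Blev Cq k 0)..(Blev Cq k 1),
        gpdf σ x t * (Blev Cq k 1 - t) / (2 * Cq / ((k : ℝ) - 1)) := by
      apply intervalIntegral.integral_nonneg (Blev_mono hC hk (Nat.zero_le 1))
      intro t ht
      have := (gpdf_pos hσ x t).le
      have h2 := ht.2
      exact div_nonneg (mul_nonneg this (by linarith)) hd.le
    linarith
  · have hpos : 0 < ∫ t in Set.Ici (Blev Cq k (k-1)), gpdf σ x t := by
      rw [MeasureTheory.setIntegral_pos_iff_support_of_nonneg_ae
        (Filter.Eventually.of_forall fun t => (gpdf_pos hσ x t).le)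
        ((integrable_gpdf hσ x).integrableOn)]
      rw [hsupp, Set.univ_inter, Real.volume_Ici]
      exact ENNReal.zero_lt_top
    have hnn : 0 ≤ ∫ t in (Blev Cq k (k-2))..(Blev Cq k (k-1)),
        gpdf σ x t * (t - Blev Cq k (k-2)) / (2 * Cq / ((k : ℝ) - 1)) := by
      apply intervalIntegral.integral_nonneg (Blev_mono hC hk (by omega : k - 2 ≤ k - 1))
      intro t ht
      have := (gpdf_pos hσ x t).le
      have h1 := ht.1
      exact div_nonneg (mul_nonneg this (by linarith)) hd.le
    linarith
  · have hab : Blev Cq k (r-1) < Blev Cq k r := Blev_strict hC hk (by omega)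
    have hpos : 0 < ∫ t in (Blev Cq k (r-1))..(Blev Cq k r),
        gpdf σ x t * (t - Blev Cq k (r-1)) / (2 * Cq / ((k : ℝ) - 1)) := by
      apply intervalIntegral.intervalIntegral_pos_of_pos_on
      · apply Continuous.intervalIntegrable
        fun_prop
      · intro t ht
        have h1 : 0 < t - Blev Cq k (r-1) := by linarith [ht.1]
        have := gpdf_pos hσ x t
        exact div_pos (mul_pos this h1) hd
      · exact hab
    have hnn : 0 ≤ ∫ t in (Blev Cq k r)..(Blev Cq k (r+1)),
        gpdf σ x t * (Blev Cq k (r+1) - t) / (2 * Cq / ((k : ℝ) - 1)) := by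
      apply intervalIntegral.integral_nonneg (Blev_mono hC hk (by omega : r ≤ r + 1))
      intro t ht
      have := (gpdf_pos hσ x t).le
      have h2 := ht.2
      exact div_nonneg (mul_nonneg this (by linarith)) hd.le
    linarith

end pmf
/-- Integral form of the log-sum inequality for one bucket. -/
lemma bucket_ineq {f g w L : ℝ → ℝ} (hf : ∀ t, 0 < f t) (hg : ∀ t, 0 < g t)
    (hw : ∀ t, 0 ≤ w t) (hL : ∀ t, Real.log (f t / g t) = L t)
    (hfw : Integrable (fun t => f t * w t)) (hgw : Integrable (fun t => g t * w t))
    (hfwL : Integrable (fun t => f t * w t * L t))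
    (ha : 0 < ∫ t, f t * w t) (hb : 0 < ∫ t, g t * w t) :
    (∫ t, f t * w t) * Real.log ((∫ t, f t * w t) / (∫ t, g t * w t))
      ≤ ∫ t, f t * w t * L t := by
  set a := ∫ t, f t * w t with hadef
  set b := ∫ t, g t * w t with hbdef
  have key : ∀ t, f t * w t - (a/b) * (g t * w t)
      ≤ f t * w t * L t + Real.log (b/a) * (f t * w t) := by
    intro t
    rcases eq_or_lt_of_le (hw t) with h0 | hpos
    · rw [← h0]; simp
    · have hft := hf t
      have hgt := hg t
      have h1 : Real.log ((g t * a) / (f t * b)) ≤ (g t * a)/(f t * b) - 1 :=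
        Real.log_le_sub_one_of_pos (by positivity)
      have h2 : Real.log ((g t * a) / (f t * b)) = -(L t) - Real.log (b/a) := by
        rw [← hL t, Real.log_div (by positivity) (by positivity),
          Real.log_mul hgt.ne' ha.ne', Real.log_mul hft.ne' hb.ne',
          Real.log_div hft.ne' hgt.ne', Real.log_div hb.ne' ha.ne']
        ring
      rw [h2] at h1
      have h3 : (-(L t) - Real.log (b/a)) * (f t * w t)
          ≤ ((g t * a)/(f t * b) - 1) * (f t * w t) :=
        mul_le_mul_of_nonneg_right h1 (by positivity)
      have h4 : ((g t * a)/(f t * b) - 1) * (f t * w t)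
          = (a/b) * (g t * w t) - f t * w t := by
        field_simp
      rw [h4] at h3
      nlinarith [h3]
  have I1 : Integrable (fun t => f t * w t - a/b * (g t * w t)) :=
    hfw.sub (hgw.const_mul (a/b))
  have I2 : Integrable (fun t => f t * w t * L t + Real.log (b/a) * (f t * w t)) :=
    hfwL.add (hfw.const_mul (Real.log (b/a)))
  have hint := integral_mono I1 I2 key
  rw [integral_sub hfw (hgw.const_mul (a/b)),
    integral_add hfwL (hfw.const_mul (Real.log (b/a))),
    MeasureTheory.integral_const_mul, MeasureTheory.integral_const_mul,
    ← hadef, ← hbdef, div_mul_cancel₀ _ hb.ne'] at hint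
  have hlog : Real.log (a/b) = - Real.log (b/a) := by
    rw [← Real.log_inv, inv_div]
  rw [hlog]
  nlinarith [hint]

/-- Post-processing bound at `α = 1`: the KL divergence between the quantized-Gaussian
pmfs at the extreme inputs is at most the KL divergence `C_q²/(2σ²)` between the
underlying Gaussians. -/
theorem quantGauss_kl_le_gaussian_budget (Cq σ : ℝ) (hC : 0 < Cq) (hσ : 0 < σ)
    (k : ℕ) (hk : 2 ≤ k) :
    ∑ r ∈ Finset.range k,
        qgPmf Cq σ k (Cq / 2) r *
          Real.log (qgPmf Cq σ k (Cq / 2) r / qgPmf Cq σ k (-(Cq / 2)) r)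
      ≤ Cq ^ 2 / (2 * σ ^ 2) := by
  classical
  set f := gpdf σ (Cq / 2) with hfdef
  set g := gpdf σ (-(Cq / 2)) with hgdef
  set L : ℝ → ℝ := fun t => Cq * t / σ ^ 2 with hLdef
  have hf : ∀ t, 0 < f t := gpdf_pos hσ _
  have hg : ∀ t, 0 < g t := gpdf_pos hσ _
  have hL : ∀ t, Real.log (f t / g t) = L t := fun t => log_gpdf_ratio hσ t
  have hwmeas : ∀ r, Measurable (wq Cq k r) := fun r => measurable_wq r
  have hw0 : ∀ r t, 0 ≤ wq Cq k r t := fun r t => wq_nonneg hC hk r t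
  have hwb : ∀ r t, ‖wq Cq k r t‖ ≤ 2 := fun r t => by
    rw [Real.norm_eq_abs, abs_le]
    exact ⟨by linarith [hw0 r t], wq_le_two hC hk r t⟩
  have hfw : ∀ r, Integrable (fun t => f t * wq Cq k r t) := fun r =>
    integrable_gpdf_mul_bdd hσ (hwmeas r) 2 (hwb r)
  have hgw : ∀ r, Integrable (fun t => g t * wq Cq k r t) := fun r =>
    integrable_gpdf_mul_bdd hσ (hwmeas r) 2 (hwb r)
  have hfwL : ∀ r, Integrable (fun t => f t * wq Cq k r t * L t) := fun r => by
    have h1 : Integrable (fun t => (Cq / σ ^ 2 * wq Cq k r t) * (t * f t)) :=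
      (integrable_id_mul_gpdf hσ (Cq / 2)).bdd_mul
        ((hwmeas r).const_mul _).aestronglyMeasurable
        (Filter.Eventually.of_forall fun t => by
          rw [norm_mul]
          exact mul_le_mul_of_nonneg_left (hwb r t) (by positivity) :
          ∀ᵐ t ∂volume, ‖Cq / σ ^ 2 * wq Cq k r t‖ ≤ |Cq / σ ^ 2| * 2)
    refine h1.congr (Filter.Eventually.of_forall fun t => ?_)
    simp only [hLdef]
    ring
  have hstep : ∀ r ∈ Finset.range k,
      qgPmf Cq σ k (Cq / 2) r *
          Real.log (qgPmf Cq σ k (Cq / 2) r / qgPmf Cq σ k (-(Cq / 2)) r)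
        ≤ ∫ t, f t * wq Cq k r t * L t := by
    intro r hrmem
    have hr := Finset.mem_range.mp hrmem
    have e1 : qgPmf Cq σ k (Cq / 2) r = ∫ t, f t * wq Cq k r t := qgPmf_eq hC hσ hk _ hr
    have e2 : qgPmf Cq σ k (-(Cq / 2)) r = ∫ t, g t * wq Cq k r t := qgPmf_eq hC hσ hk _ hr
    rw [e1, e2]
    exact bucket_ineq hf hg (hw0 r) hL (hfw r) (hgw r) (hfwL r)
      (e1 ▸ qgPmf_pos hC hσ hk _ hr) (e2 ▸ qgPmf_pos hC hσ hk _ hr)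
  calc ∑ r ∈ Finset.range k,
        qgPmf Cq σ k (Cq / 2) r *
          Real.log (qgPmf Cq σ k (Cq / 2) r / qgPmf Cq σ k (-(Cq / 2)) r)
      ≤ ∑ r ∈ Finset.range k, ∫ t, f t * wq Cq k r t * L t := Finset.sum_le_sum hstep
    _ = ∫ t, ∑ r ∈ Finset.range k, f t * wq Cq k r t * L t :=
        (MeasureTheory.integral_finset_sum _ (fun r _ => hfwL r)).symm
    _ = ∫ t, f t * L t := by
        have hpt : ∀ t : ℝ, ∑ r ∈ Finset.range k, f t * wq Cq k r t * L t = f t * L t := by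
          intro t
          have h1 : ∀ r ∈ Finset.range k,
              f t * wq Cq k r t * L t = wq Cq k r t * (f t * L t) := fun r _ => by ring
          rw [Finset.sum_congr rfl h1, ← Finset.sum_mul, wq_sum hC hk, one_mul]
        simp_rw [hpt]
    _ = Cq ^ 2 / (2 * σ ^ 2) := by
        have hpt : ∀ t : ℝ, f t * L t = Cq / σ ^ 2 * (t * f t) := fun t => by
          simp only [hLdef]; ring
        simp_rw [hpt]
        rw [MeasureTheory.integral_const_mul, hfdef, integral_id_mul_gpdf hσ (Cq / 2)]
        field_simp
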